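/- Let T = diag(1, e^{iπ/4}) (the π/8 gate up to phase), let Ψ = (1/√2)(|00⟩ + |11⟩), and for p ∈ [0,1] let σ(p) = (1−p)·(I⊗T)|Ψ⟩⟨Ψ|(I⊗T)† + (p/4)·(I⊗I) be the Jamiolkowski state of the π/8 gate depolarized at rate p. Let N(p) be the 2×2 matrix of σ(p)'s entries at the even-parity indices, [[σ(p)_{00,00}, σ(p)_{00,11}], [σ(p)_{11,00}, σ(p)_{11,11}]]. Then tr(N(p)) = (2−p)/2, and |tr(N(p)X)| + |tr(N(p)Y)| + |tr(N(p)Z)| = √2(1−p); consequently |tr(N(p)X)| + |tr(N(p)Y)| + |tr(N(p)Z)| > tr(N(p)) if and only if p < (6 − 2√2)/7. That is, the parity-checked Jamiolkowski state of the depolarized π/8 gate lies outside the single-qubit stabilizer octahedron exactly when the depolarizing rate is below (6 − 2√2)/7. -/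

import Mathlib

open Matrix Kronecker

noncomputable def Id2 : Matrix (Fin 2) (Fin 2) ℂ := 1
noncomputable def PX : Matrix (Fin 2) (Fin 2) ℂ := !![0, 1; 1, 0]
noncomputable def PY : Matrix (Fin 2) (Fin 2) ℂ := !![0, -Complex.I; Complex.I, 0]
noncomputable def PZ : Matrix (Fin 2) (Fin 2) ℂ := !![1, 0; 0, -1]

/-- The `π/8` gate (up to phase): `T = diag(1, e^{iπ/4})`. -/
noncomputable def Tgate : Matrix (Fin 2) (Fin 2) ℂ :=
  !![1, 0; 0, Complex.exp (Real.pi / 4 * Complex.I)]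

/-- The Bell state `Ψ = (1/√2)(|00⟩ + |11⟩)` as a vector in `ℂ²⊗ℂ²`. -/
noncomputable def bell : Fin 2 × Fin 2 → ℂ :=
  fun p => if p.1 = p.2 then ((Real.sqrt 2 : ℂ))⁻¹ else 0

/-- The projector `|Ψ⟩⟨Ψ|`. -/
noncomputable def bellProj : Matrix (Fin 2 × Fin 2) (Fin 2 × Fin 2) ℂ :=
  fun p q => bell p * (starRingEnd ℂ) (bell q)

/-- The Jamiolkowski state of the `π/8` gate depolarized at rate `p`. -/
noncomputable def sigmaDep (p : ℝ) : Matrix (Fin 2 × Fin 2) (Fin 2 × Fin 2) ℂ :=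
  (((1 - p : ℝ)) : ℂ) • ((Id2 ⊗ₖ Tgate) * bellProj * (Id2 ⊗ₖ Tgate)ᴴ) +
    (((p / 4 : ℝ)) : ℂ) • (Id2 ⊗ₖ Id2)

/-- The parity-checked Jamiolkowski state of the depolarized `π/8` gate has
`tr N = (2−p)/2` and `|tr(NX)| + |tr(NY)| + |tr(NZ)| = √2(1−p)`; consequently it
lies outside the single-qubit stabilizer octahedron iff `p < (6 − 2√2)/7`. -/
theorem stmt_17 (p : ℝ) (hp0 : 0 ≤ p) (hp1 : p ≤ 1) :
    let σ := sigmaDep p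
    let N : Matrix (Fin 2) (Fin 2) ℂ :=
      !![σ (0, 0) (0, 0), σ (0, 0) (1, 1); σ (1, 1) (0, 0), σ (1, 1) (1, 1)]
    N.trace = (((2 - p) / 2 : ℝ) : ℂ) ∧
      ‖(N * PX).trace‖ + ‖(N * PY).trace‖ +
          ‖(N * PZ).trace‖ = Real.sqrt 2 * (1 - p) ∧
      (‖(N * PX).trace‖ + ‖(N * PY).trace‖ +
          ‖(N * PZ).trace‖ > (2 - p) / 2 ↔
        p < (6 - 2 * Real.sqrt 2) / 7) := by
  intro σ N
  have hs2 : Real.sqrt 2 * Real.sqrt 2 = 2 := Real.mul_self_sqrt (by norm_num)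
  have hs1 : (1 : ℝ) < Real.sqrt 2 := by nlinarith [Real.sqrt_nonneg 2]
  have h2 : ((Real.sqrt 2 : ℂ))⁻¹ * ((Real.sqrt 2 : ℂ))⁻¹ = 1/2 := by
    rw [← mul_inv, ← Complex.ofReal_mul, hs2]; norm_num
  have hconj2 : (starRingEnd ℂ) 2 = 2 := map_ofNat _ 2
  have hsq : ((Real.sqrt 2 : ℝ) : ℂ) ^ 2 = 2 := by
    rw [sq, ← Complex.ofReal_mul, hs2]; norm_num
  have he : Complex.exp (Real.pi / 4 * Complex.I) =
      ((Real.sqrt 2 / 2 : ℝ) : ℂ) + ((Real.sqrt 2 / 2 : ℝ) : ℂ) * Complex.I := by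
    have h : (Real.pi / 4 * Complex.I : ℂ) = ((Real.pi/4 : ℝ):ℂ) * Complex.I := by
      push_cast; ring
    rw [h, Complex.exp_mul_I, ← Complex.ofReal_cos, ← Complex.ofReal_sin,
      Real.cos_pi_div_four, Real.sin_pi_div_four]
  set r : ℝ := (1 - p) * (Real.sqrt 2 / 2) / 2 with hr
  have h00 : σ (0,0) (0,0) = (((2 - p)/4 : ℝ) : ℂ) := by
    show sigmaDep p (0,0) (0,0) = _
    simp [sigmaDep, bellProj, bell, Id2, Tgate, Matrix.mul_apply, Fintype.sum_prod_type,
      Fin.sum_univ_two, Matrix.kroneckerMap_apply, Matrix.conjTranspose_apply,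
      Matrix.one_apply, he]
    try rw [hconj2]
    rw [h2]
    try ring
    try (ring_nf; simp only [Complex.I_sq, hsq]; ring)
  have h11 : σ (1,1) (1,1) = (((2 - p)/4 : ℝ) : ℂ) := by
    show sigmaDep p (1,1) (1,1) = _
    simp [sigmaDep, bellProj, bell, Id2, Tgate, Matrix.mul_apply, Fintype.sum_prod_type,
      Fin.sum_univ_two, Matrix.kroneckerMap_apply, Matrix.conjTranspose_apply,
      Matrix.one_apply, he]
    try rw [hconj2]
    rw [h2]
    try ring
    try (ring_nf; simp only [Complex.I_sq, hsq]; ring)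
  have h01 : σ (0,0) (1,1) = ((r:ℝ):ℂ) - ((r:ℝ):ℂ) * Complex.I := by
    show sigmaDep p (0,0) (1,1) = _
    simp [sigmaDep, bellProj, bell, Id2, Tgate, Matrix.mul_apply, Fintype.sum_prod_type,
      Fin.sum_univ_two, Matrix.kroneckerMap_apply, Matrix.conjTranspose_apply,
      Matrix.one_apply, he, hr]
    try rw [hconj2]
    rw [h2]
    try ring
    try (ring_nf; simp only [Complex.I_sq, hsq]; ring)
  have h10 : σ (1,1) (0,0) = ((r:ℝ):ℂ) + ((r:ℝ):ℂ) * Complex.I := by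
    show sigmaDep p (1,1) (0,0) = _
    simp [sigmaDep, bellProj, bell, Id2, Tgate, Matrix.mul_apply, Fintype.sum_prod_type,
      Fin.sum_univ_two, Matrix.kroneckerMap_apply, Matrix.conjTranspose_apply,
      Matrix.one_apply, he, hr]
    try rw [hconj2]
    rw [h2]
    try ring
    try (ring_nf; simp only [Complex.I_sq, hsq]; ring)
  have hNdef : N = !![σ (0,0) (0,0), σ (0,0) (1,1); σ (1,1) (0,0), σ (1,1) (1,1)] := rfl
  have htr : N.trace = (((2 - p) / 2 : ℝ) : ℂ) := by
    rw [hNdef, Matrix.trace_fin_two_of, h00, h11]; push_cast; ring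
  have hr0 : 0 ≤ r := by
    rw [hr]
    apply div_nonneg _ (by norm_num)
    exact mul_nonneg (by linarith) (by positivity)
  have hX : (N * PX).trace = ((2*r : ℝ) : ℂ) := by
    rw [hNdef, PX, Matrix.mul_fin_two, Matrix.trace_fin_two_of, h01, h10]
    push_cast; ring
  have hY : (N * PY).trace = ((2*r : ℝ) : ℂ) := by
    rw [hNdef, PY, Matrix.mul_fin_two, Matrix.trace_fin_two_of, h01, h10]
    push_cast
    linear_combination (-2*((r:ℝ):ℂ)) * Complex.I_sq
  have hZ : (N * PZ).trace = 0 := by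
    rw [hNdef, PZ, Matrix.mul_fin_two, Matrix.trace_fin_two_of, h00, h11]
    ring
  have habs : ‖(N * PX).trace‖ + ‖(N * PY).trace‖ +
      ‖(N * PZ).trace‖ = Real.sqrt 2 * (1 - p) := by
    rw [hX, hY, hZ, Complex.norm_real, norm_zero, Real.norm_eq_abs, abs_of_nonneg (by linarith)]
    rw [hr]; ring
  refine ⟨htr, habs, ?_⟩
  rw [habs]
  constructor
  · intro h
    nlinarith [hs2, hs1, mul_pos (show (0:ℝ) < 2*Real.sqrt 2 + 1 by nlinarith)
      (sub_pos.mpr h)]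
  · intro h
    nlinarith [hs2, hs1, mul_pos (show (0:ℝ) < 2*Real.sqrt 2 - 1 by nlinarith)
      (sub_pos.mpr h)]
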